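/- Let E ⊆ F_q^d be symmetric with 0 ∉ E, and suppose |E+E| = K|E| < q^d/2. Then the second eigenvalue μ of the Cayley graph C_{F_q^d}(E) satisfies μ^2 ≥ c|E|^2/K for an absolute constant c > 0; in particular, if K is bounded then μ ≫ |E|. -/

import Mathlib

open Pointwise Finset

private lemma orth_aux {F : Type} [Field F] [Fintype F] [DecidableEq F] {d : ℕ}
    (χ : AddChar F ℂ) (hχ : χ ≠ 1) (x : Fin d → F) :
    ∑ m : Fin d → F, χ (∑ i, x i * m i) =
      if x = 0 then ((Fintype.card F : ℂ)) ^ d else 0 := by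
  classical
  by_cases hx : x = 0
  · subst hx
    simp [Finset.card_univ, Fintype.card_fun]
  · rw [if_neg hx]
    set f : (Fin d → F) →+ F := AddMonoidHom.mk' (fun m => ∑ i, x i * m i)
      (by intro a b; simp [mul_add, Finset.sum_add_distrib]) with hf
    have hψ : ∀ m, (χ.compAddMonoidHom f) m = χ (∑ i, x i * m i) := fun m => rfl
    obtain ⟨j, hj⟩ : ∃ j, x j ≠ 0 := by
      by_contra h; push_neg at h; exact hx (funext h)
    obtain ⟨t, ht⟩ := AddChar.ne_one_iff.1 hχ
    have hne : χ.compAddMonoidHom f ≠ 0 := by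
      intro h0
      apply ht
      have := AddChar.eq_zero_iff.1 h0 (fun i => if i = j then (x j)⁻¹ * t else 0)
      rw [hψ] at this
      rw [← this]
      congr 1
      rw [Finset.sum_eq_single j]
      · field_simp
        rw [if_pos trivial]; field_simp
      · intro b _ hb; simp [hb]
      · simp
    have := AddChar.sum_eq_zero_iff_ne_zero.2 hne
    rw [← this]
    exact Finset.sum_congr rfl fun m _ => (hψ m).symm

set_option maxHeartbeats 1600000 in
theorem stmt_12 :
    ∃ c : ℝ, 0 < c ∧
      ∀ (F : Type) [Field F] [Fintype F] [DecidableEq F],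
      ∀ (d : ℕ) (E : Finset (Fin d → F)) (K : ℝ),
        E.Nonempty → (∀ x ∈ E, -x ∈ E) → (0 : Fin d → F) ∉ E →
        ((E + E).card : ℝ) = K * E.card →
        K * E.card < (Fintype.card F : ℝ) ^ d / 2 →
        ∀ (χ : AddChar F ℂ), χ ≠ 1 →
        ∀ μ : ℝ,
          (∀ m : Fin d → F, m ≠ 0 →
            ‖∑ x ∈ E, χ (∑ i, x i * m i)‖ ≤ μ) →
          c * (E.card : ℝ) ^ 2 / K ≤ μ ^ 2 := by
  classical
  refine ⟨1/2, by norm_num, ?_⟩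
  intro F _ _ _ d E K hE hsym h0 hK hKN χ hχ μ hμ
  set N : ℝ := (Fintype.card F : ℝ) ^ d with hN
  set e : ℝ := (E.card : ℝ) with he
  set S : (Fin d → F) → ℂ := fun m => ∑ x ∈ E, χ (∑ i, x i * m i) with hS
  set A : (Fin d → F) → ℝ := fun m => ‖S m‖ with hA
  -- orthogonality, complex version
  have orth : ∀ x : Fin d → F, ∑ m : Fin d → F, χ (∑ i, x i * m i) = if x = 0 then (N : ℂ) else 0 := by
    intro x
    rw [orth_aux χ hχ x]
    split_ifs <;> push_cast [hN] <;> ring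
  -- the quadruple count
  set Q : Finset (((Fin d → F) × (Fin d → F)) × ((Fin d → F) × (Fin d → F))) :=
    ((E ×ˢ E) ×ˢ (E ×ˢ E)).filter (fun p => p.1.1 + p.1.2 = p.2.1 + p.2.2) with hQdef
  -- Fourier computation of the fourth moment
  have hS2 : ∀ m : Fin d → F, S m * S m = ∑ p ∈ E ×ˢ E, χ (∑ i, (p.1 + p.2) i * m i) := by
    intro m
    rw [hS, Finset.sum_mul_sum, ← Finset.sum_product']
    refine Finset.sum_congr rfl fun p _ => ?_
    rw [← AddChar.map_add_eq_mul, ← Finset.sum_add_distrib]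
    congr 1
    refine Finset.sum_congr rfl fun i _ => ?_
    rw [Pi.add_apply, add_mul]
  have key4 : ∑ m : Fin d → F, (S m * S m) * (starRingEnd ℂ) (S m * S m) = (N : ℂ) * Q.card := by
    have expand : ∀ m : Fin d → F, (S m * S m) * (starRingEnd ℂ) (S m * S m) =
        ∑ pq ∈ (E ×ˢ E) ×ˢ (E ×ˢ E),
          χ (∑ i, (pq.1.1 + pq.1.2 - (pq.2.1 + pq.2.2)) i * m i) := by
      intro m
      rw [hS2, map_sum, Finset.sum_mul_sum, ← Finset.sum_product']
      refine Finset.sum_congr rfl fun pq _ => ?_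
      rw [← AddChar.map_neg_eq_conj, ← AddChar.map_add_eq_mul]
      congr 1
      rw [← Finset.sum_neg_distrib, ← Finset.sum_add_distrib]
      refine Finset.sum_congr rfl fun i _ => ?_
      rw [Pi.sub_apply, Pi.add_apply, Pi.add_apply]; ring
    calc ∑ m : Fin d → F, (S m * S m) * (starRingEnd ℂ) (S m * S m)
        = ∑ pq ∈ (E ×ˢ E) ×ˢ (E ×ˢ E), ∑ m : Fin d → F,
            χ (∑ i, (pq.1.1 + pq.1.2 - (pq.2.1 + pq.2.2)) i * m i) := by
          rw [Finset.sum_comm]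
          exact Finset.sum_congr rfl fun m _ => expand m
      _ = ∑ pq ∈ (E ×ˢ E) ×ˢ (E ×ˢ E),
            (if pq.1.1 + pq.1.2 - (pq.2.1 + pq.2.2) = 0 then (N : ℂ) else 0) := by
          exact Finset.sum_congr rfl fun pq _ => orth _
      _ = ∑ pq ∈ (E ×ˢ E) ×ˢ (E ×ˢ E),
            (if pq.1.1 + pq.1.2 = pq.2.1 + pq.2.2 then (N : ℂ) else 0) := by
          refine Finset.sum_congr rfl fun pq _ => ?_
          congr 1
          simp [sub_eq_zero]
      _ = (N : ℂ) * Q.card := by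
          rw [← Finset.sum_filter, ← hQdef, Finset.sum_const, nsmul_eq_mul, mul_comm]
  -- second moment
  have key2 : ∑ m : Fin d → F, S m * (starRingEnd ℂ) (S m) = (N : ℂ) * e := by
    have expand : ∀ m : Fin d → F, S m * (starRingEnd ℂ) (S m) =
        ∑ p ∈ E ×ˢ E, χ (∑ i, (p.1 - p.2) i * m i) := by
      intro m
      rw [hS, map_sum, Finset.sum_mul_sum, ← Finset.sum_product']
      refine Finset.sum_congr rfl fun p _ => ?_
      rw [← AddChar.map_neg_eq_conj, ← AddChar.map_add_eq_mul]
      congr 1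
      rw [← Finset.sum_neg_distrib, ← Finset.sum_add_distrib]
      refine Finset.sum_congr rfl fun i _ => ?_
      rw [Pi.sub_apply]; ring
    calc ∑ m : Fin d → F, S m * (starRingEnd ℂ) (S m)
        = ∑ p ∈ E ×ˢ E, ∑ m : Fin d → F, χ (∑ i, (p.1 - p.2) i * m i) := by
          rw [Finset.sum_comm]
          exact Finset.sum_congr rfl fun m _ => expand m
      _ = ∑ p ∈ E ×ˢ E, (if p.1 = p.2 then (N : ℂ) else 0) := by
          refine Finset.sum_congr rfl fun p _ => ?_
          rw [orth]
          congr 1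
          simp [sub_eq_zero]
      _ = ∑ a ∈ E, (N : ℂ) := by
          rw [Finset.sum_product]
          refine Finset.sum_congr rfl fun a ha => ?_
          simp [Finset.sum_ite_eq, ha]
      _ = (N : ℂ) * e := by
          rw [Finset.sum_const, nsmul_eq_mul, he]
          push_cast
          ring
  -- real versions
  have hA4 : ∑ m : Fin d → F, (A m) ^ 4 = N * Q.card := by
    have : ∀ m : Fin d → F, (S m * S m) * (starRingEnd ℂ) (S m * S m) = ((A m : ℝ) ^ 4 : ℝ) := by
      intro m
      rw [Complex.mul_conj]
      rw [Complex.normSq_mul]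
      push_cast
      rw [← Complex.sq_norm]
      push_cast [hA]
      ring
    have h := key4
    rw [Finset.sum_congr rfl (fun m _ => this m)] at h
    exact_mod_cast h
  have hA2 : ∑ m : Fin d → F, (A m) ^ 2 = N * e := by
    have : ∀ m : Fin d → F, S m * (starRingEnd ℂ) (S m) = ((A m : ℝ) ^ 2 : ℝ) := by
      intro m
      rw [Complex.mul_conj, ← Complex.sq_norm]
      try push_cast [hA]
      try ring
    have h := key2
    rw [Finset.sum_congr rfl (fun m _ => this m)] at h
    exact_mod_cast h
  -- Cauchy-Schwarz lower bound on Q.card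
  set r : (Fin d → F) → ℕ := fun s => ((E ×ˢ E).filter (fun p => p.1 + p.2 = s)).card with hr
  have fact1 : ∑ s ∈ E + E, r s = E.card ^ 2 := by
    rw [hr, ← Finset.card_eq_sum_card_fiberwise (f := fun p : (Fin d → F) × (Fin d → F) => p.1 + p.2)
      (t := E + E)]
    · rw [Finset.card_product]; ring
    · intro p hp
      rw [Finset.mem_coe, Finset.mem_product] at hp
      exact Finset.add_mem_add hp.1 hp.2
  have fact2 : Q.card = ∑ s ∈ E + E, (r s) ^ 2 := by
    rw [Finset.card_eq_sum_card_fiberwise (f := fun pq : ((Fin d → F) × (Fin d → F)) × ((Fin d → F) × (Fin d → F)) => pq.1.1 + pq.1.2)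
      (t := E + E)]
    · refine Finset.sum_congr rfl fun s hs => ?_
      have : Q.filter (fun pq => pq.1.1 + pq.1.2 = s) =
          ((E ×ˢ E).filter (fun p => p.1 + p.2 = s)) ×ˢ
          ((E ×ˢ E).filter (fun p => p.1 + p.2 = s)) := by
        ext pq
        simp only [hQdef, Finset.mem_filter, Finset.mem_product]
        constructor
        · rintro ⟨⟨⟨h1, h2⟩, h3⟩, h4⟩
          exact ⟨⟨h1, h4⟩, h2, h3 ▸ h4⟩
        · rintro ⟨⟨h1, h4⟩, h2, h5⟩
          exact ⟨⟨⟨h1, h2⟩, h4.trans h5.symm⟩, h4⟩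
      rw [this, Finset.card_product, hr, sq]
    · intro pq hpq
      rw [hQdef, Finset.mem_coe, Finset.mem_filter] at hpq
      obtain ⟨hmem, -⟩ := hpq
      rw [Finset.mem_product] at hmem
      obtain ⟨h1, -⟩ := hmem
      rw [Finset.mem_product] at h1
      exact Finset.add_mem_add h1.1 h1.2
  have cs : (e ^ 2) ^ 2 ≤ ((E + E).card : ℝ) * (Q.card : ℝ) := by
    have h := sq_sum_le_card_mul_sum_sq (s := E + E) (f := fun s => ((r s : ℝ)))
    have h1 : (∑ s ∈ E + E, (r s : ℝ)) = e ^ 2 := by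
      rw [he]; exact_mod_cast fact1
    calc (e ^ 2) ^ 2 = ((∑ s ∈ E + E, (r s : ℝ))) ^ 2 := by rw [h1]
      _ ≤ ((E + E).card : ℝ) * ∑ s ∈ E + E, (r s : ℝ) ^ 2 := h
      _ = ((E + E).card : ℝ) * (Q.card : ℝ) := by rw [fact2]; push_cast; ring
  -- upper bound on the fourth moment
  have hA0 : A 0 = e := by
    rw [hA, hS, he]
    simp
  have hAnonneg : ∀ m : Fin d → F, 0 ≤ A m := fun m => norm_nonneg _
  have upper : ∑ m : Fin d → F, (A m) ^ 4 ≤ e ^ 4 + μ ^ 2 * (N * e) := by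
    have h0univ : (0 : Fin d → F) ∈ (Finset.univ : Finset (Fin d → F)) := Finset.mem_univ _
    rw [← Finset.sum_erase_add _ _ h0univ]
    have hbd : ∑ m ∈ Finset.univ.erase 0, (A m) ^ 4 ≤
        μ ^ 2 * ∑ m ∈ Finset.univ.erase 0, (A m) ^ 2 := by
      rw [Finset.mul_sum]
      refine Finset.sum_le_sum fun m hm => ?_
      have hm0 : m ≠ 0 := (Finset.mem_erase.1 hm).1
      have h1 : A m ≤ μ := hμ m hm0
      have h2 : A m ^ 2 ≤ μ ^ 2 := by nlinarith [hAnonneg m]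
      nlinarith [hAnonneg m, sq_nonneg (A m)]
    have hsum2 : ∑ m ∈ Finset.univ.erase 0, (A m) ^ 2 ≤ N * e := by
      rw [← hA2]
      exact Finset.sum_le_sum_of_subset_of_nonneg (Finset.erase_subset _ _)
        (fun m _ _ => by positivity)
    have hμ2 : 0 ≤ μ ^ 2 := sq_nonneg μ
    calc ∑ m ∈ Finset.univ.erase 0, (A m) ^ 4 + (A 0) ^ 4
        ≤ μ ^ 2 * (N * e) + e ^ 4 := by
          rw [hA0]
          have := mul_le_mul_of_nonneg_left hsum2 hμ2
          linarith
      _ = e ^ 4 + μ ^ 2 * (N * e) := by ring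
  -- putting it all together
  have he1 : (1 : ℝ) ≤ e := by
    rw [he]; exact_mod_cast Finset.card_pos.2 hE
  have hEE1 : (1 : ℝ) ≤ K * e := by
    rw [← hK]
    have : (E + E).Nonempty := hE.add hE
    exact_mod_cast Finset.card_pos.2 this
  have hKpos : 0 < K := by nlinarith
  have hQc : 0 ≤ (Q.card : ℝ) := Nat.cast_nonneg _
  have hNQ : N * Q.card ≤ e ^ 4 + μ ^ 2 * (N * e) := hA4 ▸ upper
  have hcs' : e ^ 4 ≤ (K * e) * (Q.card : ℝ) := by
    have := cs
    rw [hK] at this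
    nlinarith
  have hN1 : (0 : ℝ) < N := by nlinarith
  have hepos : (0:ℝ) < e := by linarith
  have step1 : N * e ^ 4 ≤ (K * e) * e ^ 4 + μ ^ 2 * N * ((K * e) * e) := by
    nlinarith [mul_le_mul_of_nonneg_left hNQ (by positivity : (0:ℝ) ≤ K * e),
      mul_le_mul_of_nonneg_left hcs' (le_of_lt hN1)]
  have step2 : (K * e) * e ^ 4 ≤ (N / 2) * e ^ 4 :=
    mul_le_mul_of_nonneg_right (le_of_lt hKN) (by positivity)
  have hNe2 : (0:ℝ) < N * e ^ 2 := by positivity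
  have final : e ^ 2 / 2 ≤ μ ^ 2 * K := by
    have h := (mul_le_mul_iff_right₀ hNe2).1
      (by nlinarith : (N * e ^ 2) * (e ^ 2 / 2) ≤ (N * e ^ 2) * (μ ^ 2 * K))
    exact h
  rw [div_le_iff₀ hKpos]
  linarith
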